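/- If for ℙ-a.e. ω there is a random invariant density h_ω ∈ D(X,m) such that m({h_{σ^{-n}ω} > α}) → 1 as α → 0 uniformly in n, then for ℙ-a.e. ω the family {P^{(n)}_{σ^{-n}ω} g}_n is uniformly integrable for every g ∈ L¹(X,m) with g ≥ 0. -/

import Mathlib

open MeasureTheory ENNReal

/-- `P_ω^{(n)} = P_{σ^{n-1}ω} ∘ ⋯ ∘ P_ω`, `P_ω^{(0)} = id`. -/
noncomputable def clmCocycle {Ω 𝔛 : Type*} [NormedAddCommGroup 𝔛] [NormedSpace ℝ 𝔛]
    (σ : Ω → Ω) (P : Ω → (𝔛 →L[ℝ] 𝔛)) : ℕ → Ω → (𝔛 →L[ℝ] 𝔛)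
  | 0, _ => ContinuousLinearMap.id ℝ 𝔛
  | n + 1, ω => (clmCocycle σ P n (σ ω)).comp (P ω)

/-- Absolute continuity of the integral of a fixed nonnegative integrable function. -/
private lemma abscont_of_integrable {X : Type*} [MeasurableSpace X] {m : Measure X} {f : X → ℝ}
    (hf : Integrable f m) (hf0 : 0 ≤ᵐ[m] f) {ε : ℝ} (hε : 0 < ε) :
    ∃ δ > (0 : ℝ), ∀ s : Set X, m s < ENNReal.ofReal δ → ∫ x in s, f x ∂m < ε := by
  have hfin : ∫⁻ x, ENNReal.ofReal (f x) ∂m ≠ ∞ := by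
    refine ne_of_lt (lt_of_le_of_lt (lintegral_mono fun x => ?_) hf.hasFiniteIntegral)
    exact Real.ofReal_le_enorm (f x)
  obtain ⟨δ', hδ'pos, hδ'⟩ := exists_pos_setLIntegral_lt_of_measure_lt hfin
    (ε := ENNReal.ofReal ε) (by simpa using hε)
  refine ⟨(min δ' 1).toReal, ?_, fun s hms => ?_⟩
  · exact ENNReal.toReal_pos (lt_min hδ'pos zero_lt_one).ne'
      (lt_of_le_of_lt (min_le_right _ _) ENNReal.one_lt_top).ne
  · have hne : min δ' 1 ≠ ∞ := (lt_of_le_of_lt (min_le_right _ _) ENNReal.one_lt_top).ne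
    have h1 : m s < δ' := by
      refine lt_of_lt_of_le ?_ (min_le_left δ' 1)
      rwa [ENNReal.ofReal_toReal hne] at hms
    have h2 := hδ' s h1
    rw [integral_eq_lintegral_of_nonneg_ae (ae_restrict_of_ae hf0)
      hf.aestronglyMeasurable.restrict]
    exact ENNReal.toReal_lt_of_lt_ofReal h2

set_option maxHeartbeats 1000000 in
/-- If there is a random invariant density `h_ω` with
`m{h_{σ^{-n}ω} > α} → 1` as `α → 0` uniformly in `n`, then for ℙ-a.e. `ω`
the family `{P^{(n)}_{σ^{-n}ω} g}_n` is uniformly integrable for every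
nonnegative `g ∈ L¹(X,m)`. -/
theorem uniform_integrability_from_invariant_density
    {Ω : Type*} [MeasurableSpace Ω] (ℙ : Measure Ω) [IsProbabilityMeasure ℙ]
    {X : Type*} [MeasurableSpace X] (m : Measure X) [IsProbabilityMeasure m]
    (σ : Ω ≃ᵐ Ω) (hσ : Ergodic σ ℙ)
    (P : Ω → (Lp ℝ 1 m →L[ℝ] Lp ℝ 1 m))
    (hMarkov : ∀ᵐ ω ∂ℙ,
      (∀ g : Lp ℝ 1 m, 0 ≤ᵐ[m] ⇑g → 0 ≤ᵐ[m] ⇑(P ω g)) ∧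
      (∀ g : Lp ℝ 1 m, ∫ x, (P ω g) x ∂m = ∫ x, g x ∂m))
    (h : Ω → Lp ℝ 1 m)
    (hdens : ∀ᵐ ω ∂ℙ, (0 ≤ᵐ[m] ⇑(h ω)) ∧ ‖h ω‖ = 1 ∧ P ω (h ω) = h (σ ω))
    (hunif : ∀ᵐ ω ∂ℙ, ∀ ε > (0 : ℝ), ∃ α > (0 : ℝ), ∀ n : ℕ,
      1 - ENNReal.ofReal ε ≤ m {x | α < h (σ.symm^[n] ω) x}) :
    ∀ᵐ ω ∂ℙ, ∀ g : Lp ℝ 1 m, 0 ≤ᵐ[m] ⇑g →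
      ∀ ε > (0 : ℝ), ∃ δ > (0 : ℝ), ∀ A : Set X, MeasurableSet A →
        m A < ENNReal.ofReal δ → ∀ n : ℕ,
          ∫ x in A, (clmCocycle σ P n (σ.symm^[n] ω) g) x ∂m < ε := by
  -- Every Lp-1 element is integrable
  have hint : ∀ f : Lp ℝ 1 m, Integrable (⇑f) m := fun f => L1.integrable_coeFn f
  -- upgrade the a.e. hypotheses to hold along all backward iterates
  have hGood : ∀ᵐ ω ∂ℙ,
      (∀ g : Lp ℝ 1 m, 0 ≤ᵐ[m] ⇑g → 0 ≤ᵐ[m] ⇑(P ω g)) ∧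
      (∀ g : Lp ℝ 1 m, ∫ x, (P ω g) x ∂m = ∫ x, g x ∂m) ∧
      (0 ≤ᵐ[m] ⇑(h ω)) ∧ P ω (h ω) = h (σ ω) := by
    filter_upwards [hMarkov, hdens] with ω h1 h2
    exact ⟨h1.1, h1.2, h2.1, h2.2.2⟩
  have hsymm : MeasurePreserving (⇑σ.symm) ℙ ℙ := hσ.toMeasurePreserving.symm σ
  have hAll : ∀ᵐ ω ∂ℙ, ∀ k : ℕ,
      (∀ g : Lp ℝ 1 m, 0 ≤ᵐ[m] ⇑g → 0 ≤ᵐ[m] ⇑(P (σ.symm^[k] ω) g)) ∧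
      (∀ g : Lp ℝ 1 m, ∫ x, (P (σ.symm^[k] ω) g) x ∂m = ∫ x, g x ∂m) ∧
      (0 ≤ᵐ[m] ⇑(h (σ.symm^[k] ω))) ∧
      P (σ.symm^[k] ω) (h (σ.symm^[k] ω)) = h (σ (σ.symm^[k] ω)) := by
    rw [MeasureTheory.ae_all_iff]
    intro k
    exact ((hsymm.iterate k).quasiMeasurePreserving.ae hGood)
  filter_upwards [hAll, hunif] with ω hω hu
  intro g hg0 ε hε
  -- abbreviation for the backward cocycle
  set Q : ℕ → (Lp ℝ 1 m →L[ℝ] Lp ℝ 1 m) := fun n => clmCocycle σ P n (σ.symm^[n] ω) with hQ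
  have hstep : ∀ n : ℕ, ∀ f : Lp ℝ 1 m, Q (n + 1) f = Q n (P (σ.symm^[n + 1] ω) f) := by
    intro n f
    have hs : σ (σ.symm^[n + 1] ω) = σ.symm^[n] ω := by
      rw [Function.iterate_succ_apply']
      exact σ.apply_symm_apply _
    simp only [hQ, clmCocycle, hs, ContinuousLinearMap.comp_apply]
  have hQpos : ∀ n : ℕ, ∀ f : Lp ℝ 1 m, 0 ≤ᵐ[m] ⇑f → 0 ≤ᵐ[m] ⇑(Q n f) := by
    intro n
    induction n with
    | zero => intro f hf; simpa [hQ, clmCocycle] using hf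
    | succ n ih =>
      intro f hf
      rw [hstep n f]
      exact ih _ ((hω (n + 1)).1 f hf)
  have hQint : ∀ n : ℕ, ∀ f : Lp ℝ 1 m, ∫ x, (Q n f) x ∂m = ∫ x, f x ∂m := by
    intro n
    induction n with
    | zero => intro f; simp [hQ, clmCocycle]
    | succ n ih =>
      intro f
      rw [hstep n f, ih _, (hω (n + 1)).2.1 f]
  have hQh : ∀ n : ℕ, Q n (h (σ.symm^[n] ω)) = h ω := by
    intro n
    induction n with
    | zero => simp [hQ, clmCocycle]
    | succ n ih =>
      have hs : σ (σ.symm^[n + 1] ω) = σ.symm^[n] ω := by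
        rw [Function.iterate_succ_apply']
        exact σ.apply_symm_apply _
      rw [hstep n, (hω (n + 1)).2.2.2, hs, ih]
  have hQmono : ∀ n : ℕ, ∀ f₁ f₂ : Lp ℝ 1 m, ⇑f₁ ≤ᵐ[m] ⇑f₂ →
      ⇑(Q n f₁) ≤ᵐ[m] ⇑(Q n f₂) := by
    intro n f₁ f₂ hle
    have h0 : 0 ≤ᵐ[m] ⇑(f₂ - f₁) :=
      (Lp.coeFn_nonneg _).mpr (sub_nonneg.mpr ((Lp.coeFn_le f₁ f₂).mp hle))
    have := hQpos n _ h0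
    rw [map_sub] at this
    filter_upwards [this, Lp.coeFn_sub (Q n f₂) (Q n f₁)] with x hx hx'
    rw [hx'] at hx
    simpa [sub_nonneg] using hx
  -- nonnegativity of h ω
  have hhω0 : 0 ≤ᵐ[m] ⇑(h ω) := by simpa using (hω 0).2.2.1
  -- absolute continuity for g
  obtain ⟨δg, hδgpos, hδg⟩ := abscont_of_integrable (hint g) hg0 (show (0:ℝ) < ε / 4 by linarith)
  -- choose α from hunif
  obtain ⟨α, hαpos, hα⟩ := hu (δg / 2) (by linarith)
  -- choose M via Chebyshev
  set I : ℝ := ∫ x, g x ∂m with hI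
  have hI0 : 0 ≤ I := integral_nonneg_of_ae hg0
  set M : ℝ := 2 * (I + 1) / δg with hM
  have hMpos : 0 < M := by positivity
  have hCheb : m {x | M < g x} < ENNReal.ofReal δg := by
    have h1 : M * (m {x | M ≤ g x}).toReal ≤ I := mul_meas_ge_le_integral_of_nonneg hg0 (hint g) M
    have hfin : m {x | M ≤ g x} ≠ ∞ := (measure_lt_top m _).ne
    have hsub : {x | M < g x} ⊆ {x | M ≤ g x} := Set.setOf_subset_setOf.mpr fun x hx => le_of_lt hx
    refine lt_of_le_of_lt (measure_mono hsub)
      ((ENNReal.lt_ofReal_iff_toReal_lt hfin).mpr ?_)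
    have h2 : (m {x | M ≤ g x}).toReal ≤ I / M := by
      rw [le_div_iff₀ hMpos]; linarith [h1]
    refine lt_of_le_of_lt h2 ?_
    rw [div_lt_iff₀ hMpos, hM]
    have : δg * (2 * (I + 1) / δg) = 2 * (I + 1) := by
      field_simp
    nlinarith [this]
  set c : ℝ := M / α with hc
  have hcpos : 0 < c := div_pos hMpos hαpos
  -- absolute continuity for c • h ω
  obtain ⟨δh, hδhpos, hδh⟩ := abscont_of_integrable ((hint (h ω)).const_mul c)
    (by filter_upwards [hhω0] with x hx; exact mul_nonneg hcpos.le hx)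
    (show (0:ℝ) < ε / 4 by linarith)
  refine ⟨δh, hδhpos, fun A hA hmA n => ?_⟩
  -- the pieces
  set hn : Lp ℝ 1 m := h (σ.symm^[n] ω) with hhn
  have hhn0 : 0 ≤ᵐ[m] ⇑hn := (hω n).2.2.1
  set u : Lp ℝ 1 m := g ⊓ (c • hn) with hu'
  set v : Lp ℝ 1 m := g - u with hv
  set Bn : Set X := {x | hn x ≤ α} with hBn
  have hBnmeas : MeasurableSet Bn :=
    measurableSet_le (Lp.stronglyMeasurable hn).measurable measurable_const
  have hCmeas : MeasurableSet {x | M < g x} :=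
    measurableSet_lt measurable_const (Lp.stronglyMeasurable g).measurable
  -- measure of Bn is small
  have hmBn : m Bn < ENNReal.ofReal δg := by
    have hcompl : Bn = {x | α < hn x}ᶜ := by
      ext x; simp [hBn, not_lt]
    have h1 : m {x | α < hn x}ᶜ = 1 - m {x | α < hn x} :=
      prob_compl_eq_one_sub (measurableSet_lt measurable_const
        (Lp.stronglyMeasurable hn).measurable)
    have h2 : m Bn ≤ ENNReal.ofReal (δg / 2) := by
      rw [hcompl, h1]
      calc 1 - m {x | α < hn x} ≤ 1 - (1 - ENNReal.ofReal (δg / 2)) :=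
            tsub_le_tsub_left (hα n) 1
        _ ≤ ENNReal.ofReal (δg / 2) := tsub_tsub_le
    exact lt_of_le_of_lt h2 (ENNReal.ofReal_lt_ofReal_iff hδgpos |>.mpr (by linarith))
  -- u ≤ g and u ≤ c • hn a.e., and v ≥ 0 a.e.
  have hug : ⇑u ≤ᵐ[m] ⇑g := (Lp.coeFn_le u g).mpr inf_le_left
  have huch : ⇑u ≤ᵐ[m] ⇑(c • hn) := (Lp.coeFn_le u (c • hn)).mpr inf_le_right
  have hv0 : 0 ≤ᵐ[m] ⇑v := by
    rw [hv, Lp.coeFn_nonneg]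
    exact sub_nonneg.mpr inf_le_left
  -- estimate for ∫ v
  have hvle : ⇑v ≤ᵐ[m] Bn.indicator ⇑g + {x | M < g x}.indicator ⇑g := by
    filter_upwards [Lp.coeFn_sub g u, Lp.coeFn_inf g (c • hn), Lp.coeFn_smul c hn, hg0, hhn0]
      with x hx1 hx2 hx3 hxg hxh
    have hux : u x = min (g x) (c * hn x) := by
      rw [hu', hx2]
      simp only [Pi.inf_apply, hx3, Pi.smul_apply, smul_eq_mul]
    have hvx : v x = g x - min (g x) (c * hn x) := by
      rw [hv, hx1, Pi.sub_apply, hux]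
    have hmin0 : 0 ≤ min (g x) (c * hn x) := le_min hxg (mul_nonneg hcpos.le hxh)
    have hvg : v x ≤ g x := by rw [hvx]; linarith
    simp only [Pi.add_apply]
    by_cases hB : x ∈ Bn
    · rw [Set.indicator_of_mem hB]
      have h0C : 0 ≤ ({x | M < g x} : Set X).indicator (⇑g) x :=
        Set.indicator_apply_nonneg (fun _ => hxg)
      linarith
    · by_cases hC : x ∈ {x | M < g x}
      · rw [Set.indicator_of_notMem hB, Set.indicator_of_mem hC]
        linarith
      · have hαx : α < hn x := by
          simpa [hBn, not_le] using hB
        have hgle : g x ≤ M := by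
          simpa [not_lt] using hC
        have hgch : g x ≤ c * hn x := by
          have hMc : M = c * α := by
            rw [hc, div_mul_cancel₀]
            exact hαpos.ne'
          calc g x ≤ M := hgle
            _ = c * α := hMc
            _ ≤ c * hn x := by nlinarith
        have hv0x : v x = 0 := by
          rw [hvx, min_eq_left hgch]; ring
        rw [hv0x, Set.indicator_of_notMem hB, Set.indicator_of_notMem hC]
        simp
  have hintv : ∫ x, v x ∂m < ε / 4 + ε / 4 := by
    have hind : Integrable (Bn.indicator ⇑g + {x | M < g x}.indicator ⇑g) m :=
      ((hint g).indicator hBnmeas).add ((hint g).indicator hCmeas)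
    calc ∫ x, v x ∂m ≤ ∫ x, (Bn.indicator ⇑g + {x | M < g x}.indicator ⇑g) x ∂m :=
          integral_mono_ae (hint v) hind hvle
      _ = ∫ x, Bn.indicator (⇑g) x ∂m + ∫ x, ({x | M < g x} : Set X).indicator (⇑g) x ∂m := by
          simp only [Pi.add_apply]
          exact integral_add ((hint g).indicator hBnmeas) ((hint g).indicator hCmeas)
      _ = ∫ x in Bn, g x ∂m + ∫ x in {x | M < g x}, g x ∂m := by
          rw [integral_indicator hBnmeas, integral_indicator hCmeas]
      _ < ε / 4 + ε / 4 := by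
          exact add_lt_add (hδg Bn hmBn) (hδg _ hCheb)
  -- now the main estimate
  have hgsplit : Q n g = Q n u + Q n v := by
    rw [hv, map_sub]; abel
  have hQu : ⇑(Q n u) ≤ᵐ[m] fun x => c * (h ω) x := by
    have h1 : ⇑(Q n u) ≤ᵐ[m] ⇑(Q n (c • hn)) := hQmono n u (c • hn) huch
    have h2 : Q n (c • hn) = c • h ω := by rw [_root_.map_smul, hQh n]
    filter_upwards [h1, Lp.coeFn_smul c (h ω)] with x hx1 hx2
    rw [h2] at hx1
    rw [hx2] at hx1
    exact hx1
  have hterm1 : ∫ x in A, (Q n u) x ∂m < ε / 4 := by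
    have h1 : ∫ x in A, (Q n u) x ∂m ≤ ∫ x in A, c * (h ω) x ∂m :=
      setIntegral_mono_ae ((hint (Q n u)).integrableOn)
        (((hint (h ω)).const_mul c).integrableOn) hQu
    exact lt_of_le_of_lt h1 (hδh A hmA)
  have hterm2 : ∫ x in A, (Q n v) x ∂m < ε / 4 + ε / 4 := by
    have h1 : ∫ x in A, (Q n v) x ∂m ≤ ∫ x, (Q n v) x ∂m :=
      setIntegral_le_integral (hint (Q n v)) (hQpos n v hv0)
    rw [hQint n v] at h1
    exact lt_of_le_of_lt h1 hintv
  have hsplit : ∫ x in A, (Q n g) x ∂m = ∫ x in A, (Q n u) x ∂m + ∫ x in A, (Q n v) x ∂m := by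
    rw [hgsplit]
    have := Lp.coeFn_add (Q n u) (Q n v)
    rw [integral_congr_ae (ae_restrict_of_ae this)]
    exact integral_add ((hint (Q n u)).integrableOn) ((hint (Q n v)).integrableOn)
  have : ∫ x in A, (Q n g) x ∂m < ε / 4 + (ε / 4 + ε / 4) := by
    rw [hsplit]; exact add_lt_add hterm1 hterm2
  calc ∫ x in A, (clmCocycle σ P n (σ.symm^[n] ω) g) x ∂m = ∫ x in A, (Q n g) x ∂m := rfl
    _ < ε / 4 + (ε / 4 + ε / 4) := this
    _ < ε := by linarith
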